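/- arXiv:math/0701418 — 2 statements merged into one kernel-verified Lean document; each statement's English description precedes it below -/
import Mathlib

section
/- Let δ, ε > 0 and let d_ρ = ρ/(1−ρ) for ρ ∈ [0,1). Then there exist η > 0, c > 0 and R < ∞ such that for every z ∈ ℝ₊² with z(2)/z(1) > d_ρ² + δ and |z| > R, and every real n with ε|z| < n ≤ z(1), one has μ(z − (0,1)) − μ(z − (n, −(d_ρ + η)n)) > c|z|, where μ(y) = (√y(1) + √y(2))² for y ∈ ℝ₊² and |z| = |z(1)| + |z(2)|. -/
open MeasureTheory ProbabilityTheory Filter Real Set Topology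

noncomputable section

namespace CompetitionInterface

/-- A directed (up-right) step in `ℤ²`. -/
def DStep (a b : ℤ × ℤ) : Prop := b = a + (1, 0) ∨ b = a + (0, 1)

/-- `p` is a finite directed path from `z` to `z'`. -/
def IsDirPath (z z' : ℤ × ℤ) (p : List (ℤ × ℤ)) : Prop :=
  p ≠ [] ∧ p.head? = some z ∧ p.getLast? = some z' ∧ p.Chain' DStep

/-- The last-passage time `T(z → z')` for the weights `X`:  the maximal total weight of a
directed path from `z` to `z'` (by convention `sSup ∅ = 0`). -/
def lpp (X : ℤ × ℤ → ℝ) (z z' : ℤ × ℤ) : ℝ :=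
  sSup {w | ∃ p, IsDirPath z z' p ∧ w = (p.map X).sum}

/-- The boundary point `A_k = (α_k + 1, k)`. -/
def ptA (a : ℕ → ℤ) (k : ℕ) : ℤ × ℤ := (a k + 1, (k : ℤ))

/-- The boundary point `B_m = (m, β_m + 1)`. -/
def ptB (b : ℕ → ℤ) (m : ℕ) : ℤ × ℤ := ((m : ℤ), b m + 1)

/-- `G¹(z) = max_{0 < k ≤ z(2)} T(A_k → z)`. -/
def G1 (X : ℤ × ℤ → ℝ) (a : ℕ → ℤ) (z : ℤ × ℤ) : ℝ :=
  sSup {w | ∃ k : ℕ, 1 ≤ k ∧ (k : ℤ) ≤ z.2 ∧ w = lpp X (ptA a k) z}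

/-- `G²(z) = max_{0 < m ≤ z(1)} T(B_m → z)`. -/
def G2 (X : ℤ × ℤ → ℝ) (b : ℕ → ℤ) (z : ℤ × ℤ) : ℝ :=
  sSup {w | ∃ m : ℕ, 1 ≤ m ∧ (m : ℤ) ≤ z.1 ∧ w = lpp X (ptB b m) z}

/-- `G(z) = max (G¹(z), G²(z))`. -/
def Gf (X : ℤ × ℤ → ℝ) (a b : ℕ → ℤ) (z : ℤ × ℤ) : ℝ := max (G1 X a z) (G2 X b z)

/-- The competition interface determined by the passage-time function `g`:
`φ₀ = (0,0)` and `φ_{n+1} = φ_n + (1,0)` if `g (φ_n + (1,0)) < g (φ_n + (0,1))`,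
`φ_{n+1} = φ_n + (0,1)` otherwise. -/
def phi (g : ℤ × ℤ → ℝ) : ℕ → ℤ × ℤ
  | 0 => (0, 0)
  | n + 1 =>
      if g (phi g n + (1, 0)) < g (phi g n + (0, 1)) then phi g n + (1, 0)
      else phi g n + (0, 1)

/-- `|z| = |z(1)| + |z(2)|`, as a real number. -/
def znorm (z : ℤ × ℤ) : ℝ := |(z.1 : ℝ)| + |(z.2 : ℝ)|

/-- The unit (Euclidean) direction of a lattice point. -/
def dirOf (z : ℤ × ℤ) : ℝ × ℝ :=
  ((z.1 : ℝ) / Real.sqrt ((z.1 : ℝ) ^ 2 + (z.2 : ℝ) ^ 2),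
   (z.2 : ℝ) / Real.sqrt ((z.1 : ℝ) ^ 2 + (z.2 : ℝ) ^ 2))

/-- `ψ(t) = (I(t), J(t)) = φ_n` for `t ∈ [G(φ_n), G(φ_{n+1}))`. -/
def psi (g : ℤ × ℤ → ℝ) (t : ℝ) : ℤ × ℤ := phi g (sSup {n : ℕ | g (phi g n) ≤ t})

/-- The family `X` is i.i.d. with the exponential distribution of mean 1. -/
def IIDExp {Ω : Type*} [MeasurableSpace Ω] (μ : Measure Ω) (X : ℤ × ℤ → Ω → ℝ) : Prop :=
  (∀ z, Measurable (X z)) ∧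
    iIndepFun X μ ∧ ∀ z, μ.map (X z) = expMeasure 1

/-- The boundary sequence `α` is integer valued, negative, nonincreasing (for indices `≥ 1`)
and has `α_k / k → -(1-λ)/λ`. -/
def BoundaryA (a : ℕ → ℤ) (lam : ℝ) : Prop :=
  (∀ k, 1 ≤ k → a k < 0) ∧ (∀ k, 1 ≤ k → a (k + 1) ≤ a k) ∧
    Tendsto (fun k : ℕ => (a k : ℝ) / k) atTop (𝓝 (-(1 - lam) / lam))

/-- The boundary sequence `β` is integer valued, negative, nonincreasing (for indices `≥ 1`)
and has `β_m / m → -ρ/(1-ρ)`. -/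
def BoundaryB (b : ℕ → ℤ) (rho : ℝ) : Prop :=
  (∀ m, 1 ≤ m → b m < 0) ∧ (∀ m, 1 ≤ m → b (m + 1) ≤ b m) ∧
    Tendsto (fun m : ℕ => (b m : ℝ) / m) atTop (𝓝 (-rho / (1 - rho)))

/-- The geometric distribution on `{0, 1, 2, …} ⊆ ℝ` with success probability `p`
(mean `(1-p)/p`). -/
def geomMeasure (p : ℝ) : Measure ℝ :=
  Measure.sum fun k : ℕ => ENNReal.ofReal (p * (1 - p) ^ k) • Measure.dirac (k : ℝ)

/-- The increment sequence `(-(α₁+1), α₁ - α₂, α₂ - α₃, …)` of a random boundary sequence,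
as real-valued random variables. -/
def bInc {Ω : Type*} (A : Ω → ℕ → ℤ) : ℕ → Ω → ℝ
  | 0 => fun ω => ((-(A ω 1 + 1) : ℤ) : ℝ)
  | k + 1 => fun ω => ((A ω (k + 1) - A ω (k + 2) : ℤ) : ℝ)

/-- The boundary pair `(α, β)` has the distribution `ν_{λ,ρ}` and is independent of the
weights `X`: the increment sequences of `α` and of `β` and the weights are all jointly
independent, the `α`-increments being i.i.d. geometric with mean `(1-λ)/λ` and the
`β`-increments i.i.d. geometric with mean `ρ/(1-ρ)`. -/
def NuBoundary {Ω : Type*} [MeasurableSpace Ω] (μ : Measure Ω)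
    (X : ℤ × ℤ → Ω → ℝ) (A B : Ω → ℕ → ℤ) (lam rho : ℝ) : Prop :=
  (∀ z, Measurable (X z)) ∧ (∀ k, Measurable fun ω => A ω k) ∧
  (∀ m, Measurable fun ω => B ω m) ∧
  iIndepFun (Sum.elim X (Sum.elim (bInc A) (bInc B))) μ ∧
  (∀ z, μ.map (X z) = expMeasure 1) ∧
  (∀ k, μ.map (bInc A k) = geomMeasure lam) ∧
  (∀ m, μ.map (bInc B m) = geomMeasure (1 - rho)) ∧
  (∀ᵐ ω ∂μ, (∀ k, 1 ≤ k → A ω k < 0) ∧ (∀ k, 1 ≤ k → A ω (k + 1) ≤ A ω k) ∧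
    (∀ m, 1 ≤ m → B ω m < 0) ∧ (∀ m, 1 ≤ m → B ω (m + 1) ≤ B ω m))

/-- Casting a lattice point to `ℝ²`. -/
def toR2 (z : ℤ × ℤ) : ℝ × ℝ := ((z.1 : ℝ), (z.2 : ℝ))

/-- An infinite directed (up-right) path. -/
def IsDirSeq (f : ℕ → ℤ × ℤ) : Prop := ∀ n, DStep (f n) (f (n + 1))

/-- `f` is a semi-infinite geodesic for the weights `X`: every finite subpath is a geodesic. -/
def IsSemiGeo (X : ℤ × ℤ → ℝ) (f : ℕ → ℤ × ℤ) : Prop :=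
  IsDirSeq f ∧ ∀ k l : ℕ, k ≤ l → lpp X (f k) (f l) = ∑ j ∈ Finset.Icc k l, X (f j)

/-- The infinite path `f` has asymptotic direction `e^{iθ} = (cos θ, sin θ)`. -/
def HasDir (f : ℕ → ℤ × ℤ) (θ : ℝ) : Prop :=
  Tendsto (fun n => dirOf (f n)) atTop (𝓝 (Real.cos θ, Real.sin θ))

/-- The polygonal curve in `ℝ²` traced by the infinite path `f`. -/
def pathSet (f : ℕ → ℤ × ℤ) : Set (ℝ × ℝ) := ⋃ n, segment ℝ (toR2 (f n)) (toR2 (f (n + 1)))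

/-- Euclidean distance in `ℝ²`. -/
def edist2 (x y : ℝ × ℝ) : ℝ := Real.sqrt ((x.1 - y.1) ^ 2 + (x.2 - y.2) ^ 2)

/-- The path `f`, with asymptotic direction `e^{iθ}`, has fluctuation at most `κ`:
for all sufficiently large `r`, every intersection point of the (polygonal) path with the
hyperplane through `f 0 + r e^{iθ}` perpendicular to `e^{iθ}` is within distance `r^κ` of
`f 0 + r e^{iθ}`. -/
def FluctAtMost (f : ℕ → ℤ × ℤ) (θ κ : ℝ) : Prop :=
  ∀ᶠ r : ℝ in atTop, ∀ x ∈ pathSet f,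
    (x.1 - ((toR2 (f 0)).1 + r * Real.cos θ)) * Real.cos θ +
        (x.2 - ((toR2 (f 0)).2 + r * Real.sin θ)) * Real.sin θ = 0 →
      edist2 x ((toR2 (f 0)).1 + r * Real.cos θ, (toR2 (f 0)).2 + r * Real.sin θ) ≤ r ^ κ

/-- The fluctuation exponent `ξ₁(θ)` of the semi-infinite geodesics of direction `e^{iθ}`. -/
def xi1 {Ω : Type*} [MeasurableSpace Ω] (μ : Measure Ω) (X : ℤ × ℤ → Ω → ℝ) (θ : ℝ) : ℝ :=
  sInf {κ : ℝ |
    μ {ω | ∀ f, IsSemiGeo (fun z => X z ω) f → HasDir f θ → FluctAtMost f θ κ} = 1}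

/-- The fluctuation exponent `ξ₂` of the set of all semi-infinite geodesics. -/
def xi2 {Ω : Type*} [MeasurableSpace Ω] (μ : Measure Ω) (X : ℤ × ℤ → Ω → ℝ) : ℝ :=
  sInf {κ : ℝ |
    μ {ω | ∀ f θ, IsSemiGeo (fun z => X z ω) f → HasDir f θ → FluctAtMost f θ κ} = 1}

/-- The fluctuation exponent `χ` of the competition interface (fluctuations measured
about its almost-sure asymptotic direction). -/
def chiExp {Ω : Type*} [MeasurableSpace Ω] (μ : Measure Ω) (X : ℤ × ℤ → Ω → ℝ)
    (A B : Ω → ℕ → ℤ) : ℝ :=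
  sInf {κ : ℝ |
    μ {ω | ∃ θ ∈ Icc 0 (π / 2),
        HasDir (phi (Gf (fun z => X z ω) (A ω) (B ω))) θ ∧
        FluctAtMost (phi (Gf (fun z => X z ω) (A ω) (B ω))) θ κ} = 1}

/-- `M(z)`: the (a.s. unique) index `m`, `0 < m ≤ z(1)`, maximizing `T(B_m → z)`. -/
def argMaxB (X : ℤ × ℤ → ℝ) (b : ℕ → ℤ) (z : ℤ × ℤ) : ℕ :=
  sSup {m : ℕ | 1 ≤ m ∧ (m : ℤ) ≤ z.1 ∧
    ∀ m' : ℕ, 1 ≤ m' → (m' : ℤ) ≤ z.1 → lpp X (ptB b m') z ≤ lpp X (ptB b m) z}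

/-- The geodesic from `s` to `e` passes through `m` (formulated through additivity of
passage times; a.s. equivalent to the geodesic containing `m`). -/
def PassesThrough (X : ℤ × ℤ → ℝ) (s e m : ℤ × ℤ) : Prop :=
  s ≤ m ∧ m ≤ e ∧ lpp X s m + lpp X m e - X m = lpp X s e

/-- The angle between two vectors of `ℝ²`. -/
def vang (u v : ℝ × ℝ) : ℝ :=
  Real.arccos ((u.1 * v.1 + u.2 * v.2) /
    (Real.sqrt (u.1 ^ 2 + u.2 ^ 2) * Real.sqrt (v.1 ^ 2 + v.2 ^ 2)))

/-- `R^out[x, z]`: the set of `z' ≥ z` such that the geodesic from `x` to `z'`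
passes through `z`. -/
def Rout (X : ℤ × ℤ → ℝ) (x z : ℤ × ℤ) : Set (ℤ × ℤ) :=
  {z' | z ≤ z' ∧ PassesThrough X x z' z}

/-- The cone `C(x, z, φ)` of points `z' ≥ x` making an angle at most `φ` with `z - x` at `x`. -/
def cone (x z : ℤ × ℤ) (φ : ℝ) : Set (ℤ × ℤ) :=
  {z' | x ≤ z' ∧ vang (toR2 z - toR2 x) (toR2 z' - toR2 x) ≤ φ}

/-- `(x, z)` is a good pair (for the exponent `δ`). -/
def GoodPair (δ : ℝ) (X : ℤ × ℤ → ℝ) (x z : ℤ × ℤ) : Prop :=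
  Rout X x z ⊆ cone x z (znorm (z - x) ^ (-δ)) ∪
    ⋃ z' ∈ {z' ∈ cone x z (znorm (z - x) ^ (-δ)) | znorm (z' - x) > 2 * znorm (z - x)},
      Rout X x z'

/-- `μ(y) = (√y(1) + √y(2))²`, the Rost shape function. -/
def muSh (y : ℝ × ℝ) : ℝ := (Real.sqrt y.1 + Real.sqrt y.2) ^ 2

/-- `|z| = |z(1)| + |z(2)|` for `z ∈ ℝ²`. -/
def rnorm (z : ℝ × ℝ) : ℝ := |z.1| + |z.2|

/-- The shape function `p` of Proposition 2.1 (the case conditions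
`(ρ/(1-ρ))² ≤ z(2)/z(1) ≤ (λ/(1-λ))²` etc. are written in cleared-denominator form). -/
def pShape (lam rho : ℝ) (z : ℝ × ℝ) : ℝ :=
  if rho ^ 2 * z.1 ≤ (1 - rho) ^ 2 * z.2 ∧ (1 - lam) ^ 2 * z.2 ≤ lam ^ 2 * z.1 then
    (Real.sqrt z.1 + Real.sqrt z.2) ^ 2
  else if lam ^ 2 * z.1 ≤ (1 - lam) ^ 2 * z.2 ∧
      lam * rho * z.1 ≤ (1 - lam) * (1 - rho) * z.2 then
    z.1 / (1 - lam) + z.2 / lam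
  else
    z.1 / (1 - rho) + z.2 / rho

/-- The shape function `p₂` for the point to half-line model. -/
def p2Shape (rho : ℝ) (z : ℝ × ℝ) : ℝ :=
  if rho ^ 2 * z.1 ≤ (1 - rho) ^ 2 * z.2 then (Real.sqrt z.1 + Real.sqrt z.2) ^ 2
  else z.1 / (1 - rho) + z.2 / rho


set_option maxHeartbeats 1000000 in
/-- **Lemma 3.2.** A deterministic estimate on the shape function μ:
for δ, ε > 0 there are η > 0, c > 0 and R < ∞ such that whenever
`z(2)/z(1) > d_ρ² + δ`, `|z| > R` and `ε|z| < n ≤ z(1)`, one has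
`μ(z - (0,1)) - μ(z - (n, -(d_ρ + η)n)) > c|z|`. -/
theorem shape_function_cone_estimate
    (rho δ ε : ℝ) (hrho : rho ∈ Ico (0 : ℝ) 1) (hδ : 0 < δ) (hε : 0 < ε) :
    ∃ η > (0 : ℝ), ∃ c > (0 : ℝ), ∃ R : ℝ,
      ∀ z : ℝ × ℝ, 0 ≤ z.1 → 0 ≤ z.2 →
        (rho / (1 - rho)) ^ 2 + δ < z.2 / z.1 → R < rnorm z →
        ∀ n : ℝ, ε * rnorm z < n → n ≤ z.1 →
          muSh (z - (0, 1)) - muSh (z - (n, -(rho / (1 - rho) + η) * n)) > c * rnorm z := by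
  obtain ⟨hr0, hr1⟩ := hrho
  have h1r : (0:ℝ) < 1 - rho := by linarith
  set d : ℝ := rho / (1 - rho) with hd
  have hd0 : 0 ≤ d := div_nonneg hr0 h1r.le
  set s : ℝ := Real.sqrt (d ^ 2 + δ) with hs
  have hs2 : s ^ 2 = d ^ 2 + δ := Real.sq_sqrt (by positivity)
  have hspos : 0 < s := Real.sqrt_pos.2 (by positivity)
  have hds : d < s := by nlinarith [sq_nonneg (s - d), sq_nonneg (s + d)]
  clear_value s
  clear hs
  set η : ℝ := (s - d) / 2 with hη
  have hη0 : 0 < η := by simp only [hη]; linarith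
  set e : ℝ := d + η with he
  have he0 : 0 < e := by simp only [he]; linarith
  set gap : ℝ := (s - d) / 4 with hgap
  have hgap0 : 0 < gap := by simp only [hgap]; linarith
  set m : ℝ := s - gap with hm
  have hm0 : 0 < m := by simp only [hm, hgap]; linarith
  have hme : e = m - gap := by simp only [hm, he, hη, hgap]; ring
  have hsm : s - m = gap := by simp only [hm]; ring
  have hKnn : (0:ℝ) ≤ (m / (2 * gap)) ^ 2 := sq_nonneg _
  have h4gε : (0:ℝ) ≤ 4 / (gap * ε) := by positivity
  clear_value η e gap m
  refine ⟨η, hη0, gap * ε / 16, by positivity,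
    ((1 + s ^ 2) / s ^ 2) * (4 + (m / (2 * gap)) ^ 2 + 4 / (gap * ε) + 1), ?_⟩
  intro z hz1 hz2 hslope hR n hn1 hn2
  set x1 := z.1 with hx1def
  set x2 := z.2 with hx2def
  have hx1 : 0 < x1 := by
    rcases lt_or_eq_of_le hz1 with h | h
    · exact h
    · exfalso; rw [← h, div_zero] at hslope; linarith [sq_nonneg d]
  have hslope' : s ^ 2 * x1 < x2 := by
    rw [hs2]
    calc (d ^ 2 + δ) * x1 < (x2 / x1) * x1 := mul_lt_mul_of_pos_right hslope hx1
      _ = x2 := by field_simp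
  have hx2 : 0 < x2 := lt_trans (by positivity) hslope'
  have hnorm : rnorm z = x1 + x2 := by
    simp [rnorm, abs_of_nonneg hz1, abs_of_nonneg hz2, ← hx1def, ← hx2def]
  have hnormpos : 0 < rnorm z := by rw [hnorm]; positivity
  have hn0 : 0 < n := lt_trans (by positivity) hn1
  have hen : 0 ≤ e * n := mul_nonneg he0.le hn0.le
  -- x2 is most of the norm
  have hx2big : 4 + (m / (2 * gap)) ^ 2 + 4 / (gap * ε) < x2 := by
    set K := 4 + (m / (2 * gap)) ^ 2 + 4 / (gap * ε) + 1 with hK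
    have hs2pos : (0:ℝ) < s ^ 2 := by positivity
    have hR2 : (1 + s ^ 2) * K < s ^ 2 * rnorm z := by
      have h0 := mul_lt_mul_of_pos_right hR hs2pos
      have h1 : (1 + s ^ 2) / s ^ 2 * K * s ^ 2 = (1 + s ^ 2) * K := by field_simp
      rw [h1] at h0; linarith [h0]
    have h2 : s ^ 2 * rnorm z ≤ (1 + s ^ 2) * x2 := by rw [hnorm]; linarith [hslope']
    have h3 : K < x2 := by
      by_contra hcon
      push_neg at hcon
      linarith [mul_nonneg (sq_nonneg s) (sub_nonneg.2 hcon)]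
    simp only [hK] at h3; linarith
  have hx2four : (4:ℝ) ≤ x2 := by linarith
  -- square roots
  set u1 := Real.sqrt x1 with hu1
  set u1' := Real.sqrt (x1 - n) with hu1'
  set u2 := Real.sqrt x2 with hu2
  set v2 := Real.sqrt (x2 - 1) with hv2
  set v2' := Real.sqrt (x2 + e * n) with hv2'
  have hmu1 : muSh (z - (0, 1)) = (u1 + v2) ^ 2 := by
    simp only [muSh, Prod.fst_sub, Prod.snd_sub, hu1, hv2, ← hx1def, ← hx2def]
    norm_num
  have hmu2 : muSh (z - (n, -(d + η) * n)) = (u1' + v2') ^ 2 := by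
    simp only [muSh, Prod.fst_sub, Prod.snd_sub, hu1', hv2', he, ← hx1def, ← hx2def]
    ring_nf
  rw [hmu1, hmu2]
  have hu1sq : u1 ^ 2 = x1 := Real.sq_sqrt hx1.le
  have hu1'sq : u1' ^ 2 = x1 - n := Real.sq_sqrt (by linarith)
  have hu2sq : u2 ^ 2 = x2 := Real.sq_sqrt hx2.le
  have hv2sq : v2 ^ 2 = x2 - 1 := Real.sq_sqrt (by linarith)
  have hv2'sq : v2' ^ 2 = x2 + e * n := Real.sq_sqrt (by linarith)
  have hu1pos : 0 < u1 := Real.sqrt_pos.2 hx1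
  have hu2pos : 0 < u2 := Real.sqrt_pos.2 hx2
  have hu1'0 : 0 ≤ u1' := Real.sqrt_nonneg _
  have hv20 : 0 ≤ v2 := Real.sqrt_nonneg _
  have hv2'0 : 0 ≤ v2' := Real.sqrt_nonneg _
  have hu1le : u1' ≤ u1 := Real.sqrt_le_sqrt (by linarith)
  have hv2le : v2 ≤ v2' := Real.sqrt_le_sqrt (by linarith)
  have huv2 : u2 ≤ v2' := Real.sqrt_le_sqrt (by linarith)
  have hu2two : 2 ≤ u2 := by
    have h0 : Real.sqrt 4 ≤ u2 := Real.sqrt_le_sqrt hx2four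
    rwa [show (4:ℝ) = 2 ^ 2 by norm_num, Real.sqrt_sq (by norm_num : (0:ℝ) ≤ 2)] at h0
  have hu2m : m / (2 * gap) ≤ u2 := by
    calc m / (2 * gap) ≤ Real.sqrt ((m / (2 * gap)) ^ 2) := by
          rw [Real.sqrt_sq (by positivity)]
      _ ≤ u2 := Real.sqrt_le_sqrt (by linarith)
  have hu2v2 : u2 - 1 ≤ v2 := by
    have h0 : Real.sqrt ((u2 - 1) ^ 2) ≤ v2 := by
      apply Real.sqrt_le_sqrt
      have hexp : (u2 - 1) ^ 2 = u2 ^ 2 - 2 * u2 + 1 := by ring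
      rw [hexp, hu2sq]; linarith
    rwa [Real.sqrt_sq (by linarith)] at h0
  have hu1u2 : s * u1 ≤ u2 := by
    have h0 : Real.sqrt (s ^ 2 * x1) ≤ u2 := Real.sqrt_le_sqrt hslope'.le
    rwa [Real.sqrt_mul (by positivity) x1, Real.sqrt_sq hspos.le] at h0
  clear_value u1 u1' u2 v2 v2' x1 x2
  clear hu1 hu1' hu2 hv2 hv2' hx1def hx2def hmu1 hmu2 hslope hx2four
  -- n is a positive fraction of x2
  have hnx2 : ε * x2 < n := by
    have h0 : ε * x2 ≤ ε * rnorm z :=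
      mul_le_mul_of_nonneg_left (by rw [hnorm]; linarith) hε.le
    linarith
  have hgapn : 4 ≤ gap * n := by
    have h4 : 4 / (gap * ε) < x2 := by linarith
    have h5 : 4 < gap * ε * x2 := by rw [div_lt_iff₀ (by positivity)] at h4; linarith
    have h6 : gap * (ε * x2) ≤ gap * n := mul_le_mul_of_nonneg_left hnx2.le hgap0.le
    linarith [h5, h6]
  -- lower bound for the first increment
  have hA : s * n ≤ 2 * u2 * (u1 - u1') := by
    have hsumpos : 0 < u1 + u1' := by linarith
    have hfrac : u1 - u1' = n / (u1 + u1') := by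
      rw [eq_div_iff (ne_of_gt hsumpos)]
      have h0 : (u1 - u1') * (u1 + u1') = u1 ^ 2 - u1' ^ 2 := by ring
      rw [h0, hu1sq, hu1'sq]; ring
    have hsum : s * (u1 + u1') ≤ 2 * u2 := by
      have h1 : s * u1' ≤ s * u1 := mul_le_mul_of_nonneg_left hu1le hspos.le
      linarith [hu1u2]
    rw [hfrac, ← mul_div_assoc, le_div_iff₀ hsumpos]
    have h2 := mul_le_mul_of_nonneg_right hsum hn0.le
    linarith [h2]
  -- upper bound for the second increment
  have hB : 2 * u2 * (v2' - v2) ≤ m * n + 2 := by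
    have hDpos : 0 < v2' + v2 := by linarith
    have hfrac : v2' - v2 = (e * n + 1) / (v2' + v2) := by
      rw [eq_div_iff (ne_of_gt hDpos)]
      have h0 : (v2' - v2) * (v2' + v2) = v2' ^ 2 - v2 ^ 2 := by ring
      rw [h0, hv2sq, hv2'sq]; ring
    have hDlb : 2 * u2 - 1 ≤ v2' + v2 := by linarith [huv2, hu2v2]
    have hgu : m ≤ 2 * gap * u2 := by
      rw [div_le_iff₀ (by positivity)] at hu2m; linarith
    have hDm : 2 * e * u2 ≤ m * (v2' + v2) := by
      have h1 : m * (2 * u2 - 1) ≤ m * (v2' + v2) := mul_le_mul_of_nonneg_left hDlb hm0.le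
      have h2 : e * u2 = m * u2 - gap * u2 := by rw [hme]; ring
      linarith [h1, hgu, h2]
    rw [hfrac, ← mul_div_assoc, div_le_iff₀ hDpos]
    have h3 := mul_le_mul_of_nonneg_right hDm hn0.le
    have h4 : u2 ≤ v2' + v2 := by linarith [hDlb, hu2two]
    linarith [h3, h4]
  -- combine
  have hAB : gap * n / 2 ≤ 2 * u2 * ((u1 + v2) - (u1' + v2')) := by
    have h8 : s * n - m * n = gap * n := by rw [← hsm]; ring
    linarith [hA, hB, h8, hgapn]
  have hSum : u2 / 2 ≤ (u1 + v2) + (u1' + v2') := by linarith [hu2v2, hu2two]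
  have h9 : (0:ℝ) < 2 * u2 := by linarith
  have hABpos : 0 ≤ (u1 + v2) - (u1' + v2') := by
    have h10 : 2 * u2 * 0 ≤ 2 * u2 * ((u1 + v2) - (u1' + v2')) := by
      rw [mul_zero]; linarith [hAB, hgapn]
    exact (mul_le_mul_iff_right₀ h9).mp h10
  have hkey : gap * n / 8 ≤ (u1 + v2) ^ 2 - (u1' + v2') ^ 2 := by
    have h11 := mul_le_mul hAB hSum (by linarith) (by linarith [hAB, hgapn])
    have hring : (2 * u2 * ((u1 + v2) - (u1' + v2'))) * ((u1 + v2) + (u1' + v2'))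
        = 2 * u2 * ((u1 + v2) ^ 2 - (u1' + v2') ^ 2) := by ring
    have h12 : 2 * u2 * (gap * n / 8) ≤ 2 * u2 * ((u1 + v2) ^ 2 - (u1' + v2') ^ 2) := by
      linarith [h11, hring]
    exact (mul_le_mul_iff_right₀ h9).mp h12
  have hfin : gap * ε / 16 * rnorm z < gap * n / 8 := by
    have h13 : gap * (ε * rnorm z) < gap * n := mul_lt_mul_of_pos_left hn1 hgap0
    linarith [h13, hgapn]
  linarith [hkey, hfin]


end CompetitionInterface
end
end

section
/- Let G : ℤ² → ℝ be any function such that G(z + (1,0)) ≠ G(z + (0,1)) for all z ∈ ℤ², and define Y(i, j) = min(G(i, j+1), G(i+1, j)) − G(i, j). Suppose (z_n)_{n ≥ 0} is a North-East Minimizing Sequence for G, i.e., z_{n+1} = z_n + (1,0) if G(z_n + (1,0)) < G(z_n + (0,1)) and z_{n+1} = z_n + (0,1) otherwise. Then (z_n) is a geodesic for the weights Y: for all 0 ≤ k ≤ ℓ, the segment z_k, …, z_ℓ maximizes Σ_{n=0}^{m−1} Y(w_n) over all directed paths w₀ = z_k, w₁, …, w_m = z_ℓ from z_k to z_ℓ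 (the sum taken over all points of the path except the final one), and the maximum value equals G(z_ℓ) − G(z_k). -/
open MeasureTheory ProbabilityTheory Filter Real Set Topology

noncomputable section

namespace CompetitionInterface

private lemma step_bound (G Y : ℤ × ℤ → ℝ)
    (hY : ∀ z : ℤ × ℤ, Y z = min (G (z + (0, 1))) (G (z + (1, 0))) - G z)
    {a b : ℤ × ℤ} (h : DStep a b) : Y a ≤ G b - G a := by
  rw [hY]
  rcases h with h | h <;> subst h
  · exact sub_le_sub_right (min_le_right _ _) _
  · exact sub_le_sub_right (min_le_left _ _) _

private lemma path_bound (G Y : ℤ × ℤ → ℝ)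
    (hY : ∀ z : ℤ × ℤ, Y z = min (G (z + (0, 1))) (G (z + (1, 0))) - G z) :
    ∀ p : List (ℤ × ℤ), p.Chain' DStep → ∀ h t : ℤ × ℤ,
      p.head? = some h → p.getLast? = some t →
      ((p.dropLast).map Y).sum ≤ G t - G h := by
  intro p
  induction p with
  | nil => intro _ h t hh _; simp at hh
  | cons a q ih =>
    intro hc h t hh ht
    cases q with
    | nil =>
      simp at hh ht
      subst hh; subst ht; simp
    | cons b r =>
      simp only [List.head?_cons, Option.some.injEq] at hh
      subst hh
      rw [List.getLast?_cons_cons] at ht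
      have hc' := List.isChain_cons_cons.mp hc
      have hstep : DStep a b := hc'.1
      have hsum : ((b :: r).dropLast.map Y).sum ≤ G t - G b :=
        ih hc'.2 b t rfl ht
      have : (a :: b :: r).dropLast = a :: (b :: r).dropLast := rfl
      rw [this, List.map_cons, List.sum_cons]
      have := step_bound G Y hY hstep
      linarith

/-- **Lemma 4.3, deterministic form.** If `G : ℤ² → ℝ` has
`G(z+(1,0)) ≠ G(z+(0,1))` everywhere, `Y(i,j) = min(G(i,j+1), G(i+1,j)) - G(i,j)`, and
`(z_n)` is a North-East Minimizing Sequence for `G`, then `(z_n)` is a geodesic for the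
weights `Y`: for `k ≤ l`, the segment `z_k, …, z_l` maximizes the `Y`-weight (summed over
all points of a directed path except the final one) among directed paths from `z_k` to
`z_l`, and the maximal weight equals `G(z_l) - G(z_k)`. -/
theorem nems_is_geodesic
    (G : ℤ × ℤ → ℝ) (hG : ∀ z : ℤ × ℤ, G (z + (1, 0)) ≠ G (z + (0, 1)))
    (Y : ℤ × ℤ → ℝ) (hY : ∀ z : ℤ × ℤ, Y z = min (G (z + (0, 1))) (G (z + (1, 0))) - G z)
    (z : ℕ → ℤ × ℤ)
    (hz : ∀ n, z (n + 1) =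
      if G (z n + (1, 0)) < G (z n + (0, 1)) then z n + (1, 0) else z n + (0, 1)) :
    ∀ k l : ℕ, k ≤ l →
      (∑ j ∈ Finset.Ico k l, Y (z j)) = G (z l) - G (z k) ∧
      ∀ p : List (ℤ × ℤ), IsDirPath (z k) (z l) p →
        ((p.dropLast).map Y).sum ≤ G (z l) - G (z k) := by
  have hYz : ∀ n, Y (z n) = G (z (n + 1)) - G (z n) := by
    intro n
    rw [hY, hz n]
    by_cases h : G (z n + (1, 0)) < G (z n + (0, 1))
    · rw [if_pos h, min_eq_right h.le]
    · rw [if_neg h, min_eq_left (not_lt.mp h)]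
  intro k l hkl
  constructor
  · induction l with
    | zero =>
      have : k = 0 := Nat.le_zero.mp hkl
      subst this; simp
    | succ m ihm =>
      rcases Nat.lt_or_ge k (m + 1) with h | h
      · have hk : k ≤ m := Nat.lt_succ_iff.mp h
        rw [Finset.sum_Ico_succ_top hk, ihm hk, hYz m]
        ring
      · have : k = m + 1 := le_antisymm hkl h
        subst this; simp
  · intro p hp
    exact path_bound G Y hY p hp.2.2.2 (z k) (z l) hp.2.1 hp.2.2.1

end CompetitionInterface
end
end
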